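/- Let A be a groupoid and let N_A be the group of pairs (F, σ), with F a strict automorphism of A and σ : 𝟭_A ⟹ F a natural transformation, under (G, γ) ⊛ (F, σ) := (F ⋙ G, x ↦ σ(x)·γ(F(x))). Then N_A acts on the set of strict automorphisms of A by (F,σ) • G := G ⋙ F, and the groupoid SAut(A) — whose objects are the strict automorphisms of A and whose morphisms from F to G are the natural transformations F ⟹ G, with vertical composition — is isomorphic as a category to the action groupoid of this N_A-action (objects: strict automorphisms; morphisms from G to G ⋙ F: the elements (F,σ) of N_A). An isomorphism is given by the identity on objects, sending the action-groupoid morphism determined by (F,σ) ∈ N_A with source G to the natural transformation G ⟹ G ⋙ F whose component at an object a is σ(G(a)). -/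

import Mathlib

/-!
Statement 1: For a groupoid `A`, the group `N_A` of pairs `(F, σ)` acts on strict
automorphisms by `(F,σ) • G := G ⋙ F`, and the groupoid `SAut(A)` (objects: strict
automorphisms, morphisms: natural transformations, vertical composition) is
isomorphic as a category to the action groupoid of this action, via the identity on
objects, sending the action-groupoid morphism determined by `(F,σ)` with source `G`
to the natural transformation with component `σ(G(a))` at `a`.
-/

open CategoryTheory

universe v u

structure GrpdAut (A : Type u) [Groupoid A] where
  F : A ⥤ A
  inv : A ⥤ A
  comp_inv : F ⋙ inv = 𝟭 A
  inv_comp : inv ⋙ F = 𝟭 A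

variable {A : Type u} [Groupoid A]

def GrpdAut.one (A : Type u) [Groupoid A] : GrpdAut A := ⟨𝟭 A, 𝟭 A, rfl, rfl⟩

/-- Composition of strict automorphisms, written left-to-right: `f.comp g = f ⋙ g`. -/
def GrpdAut.comp (f g : GrpdAut A) : GrpdAut A where
  F := f.F ⋙ g.F
  inv := g.inv ⋙ f.inv
  comp_inv := by
    rw [Functor.assoc, ← Functor.assoc g.F, g.comp_inv, Functor.id_comp, f.comp_inv]
  inv_comp := by
    rw [Functor.assoc, ← Functor.assoc f.inv, f.inv_comp, Functor.id_comp, g.inv_comp]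

/-- An element of `N_A`: a strict automorphism `F` with a natural transformation
`σ : 𝟭_A ⟹ F`. -/
structure NElem (A : Type u) [Groupoid A] where
  F : GrpdAut A
  σ : 𝟭 A ⟶ F.F

def NElem.one (A : Type u) [Groupoid A] : NElem A := ⟨GrpdAut.one A, 𝟙 (𝟭 A)⟩

/-- `(G, γ) ⊛ (F, σ) := (F ⋙ G, x ↦ σ(x)·γ(F(x)))`; `NElem.mul g f = g ⊛ f`. -/
def NElem.mul (g f : NElem A) : NElem A where
  F := f.F.comp g.F
  σ :=
    { app := fun x => f.σ.app x ≫ g.σ.app (f.F.F.obj x)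
      naturality := by
        intro x y h
        have h1 := f.σ.naturality h
        have h2 := g.σ.naturality (f.F.F.map h)
        simp only [Functor.id_map] at h1 h2
        show h ≫ f.σ.app y ≫ g.σ.app (f.F.F.obj y) =
          (f.σ.app x ≫ g.σ.app (f.F.F.obj x)) ≫ g.F.F.map (f.F.F.map h)
        rw [← Category.assoc, h1, Category.assoc, h2, Category.assoc] }

theorem NElem.mul_one' (u : NElem A) : NElem.mul u (NElem.one A) = u := by
  rcases u with ⟨F, σ⟩
  show NElem.mk F _ = NElem.mk F σ
  congr 1
  ext x
  show 𝟙 x ≫ σ.app x = σ.app x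
  simp

theorem NElem.one_mul' (u : NElem A) : NElem.mul (NElem.one A) u = u := by
  rcases u with ⟨F, σ⟩
  show NElem.mk F _ = NElem.mk F σ
  congr 1
  ext x
  show σ.app x ≫ 𝟙 _ = σ.app x
  simp

theorem NElem.mul_assoc' (w v u : NElem A) :
    NElem.mul (NElem.mul w v) u = NElem.mul w (NElem.mul v u) := by
  show NElem.mk ((u.F.comp v.F).comp w.F) _ = NElem.mk ((u.F.comp v.F).comp w.F) _
  congr 1
  ext x
  show u.σ.app x ≫ (v.σ.app (u.F.F.obj x) ≫ w.σ.app (v.F.F.obj (u.F.F.obj x))) =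
    (u.σ.app x ≫ v.σ.app (u.F.F.obj x)) ≫ w.σ.app (v.F.F.obj (u.F.F.obj x))
  rw [Category.assoc]

/-- The action of `N_A` on strict automorphisms: `(F,σ) • G := G ⋙ F`. -/
def NElem.act (n : NElem A) (G : GrpdAut A) : GrpdAut A := G.comp n.F

/-- `SAut(A)` as a category: objects are strict automorphisms of `A`, morphisms are
natural transformations, composed vertically. -/
def SAutCat (A : Type u) [Groupoid A] :=
  InducedCategory (A ⥤ A) (fun F : GrpdAut A => F.F)

instance : Category (SAutCat A) where
  Hom X Y := GrpdAut.F X ⟶ GrpdAut.F Y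
  id X := 𝟙 (GrpdAut.F X)
  comp f g := f ≫ g

/-- The action groupoid of the `N_A`-action on strict automorphisms: objects are
strict automorphisms; a morphism from `G` to `G'` is an element `n = (F,σ)` of `N_A`
with `n • G = G'` (i.e. `G ⋙ F = G'`). -/
def NActCat (A : Type u) [Groupoid A] := GrpdAut A

instance : Category (NActCat A) where
  Hom G G' := { n : NElem A // n.act G = G' }
  id G := ⟨NElem.one A, rfl⟩
  comp {G G₁ G₂} u v :=
    ⟨NElem.mul v.1 u.1, by
      show GrpdAut.comp G ((NElem.mul v.1 u.1).F) = G₂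
      rw [show GrpdAut.comp G ((NElem.mul v.1 u.1).F) =
          GrpdAut.comp (GrpdAut.comp G u.1.F) v.1.F from rfl]
      rw [show GrpdAut.comp G u.1.F = G₁ from u.2]
      exact v.2⟩
  id_comp := fun u => Subtype.ext (NElem.mul_one' u.1)
  comp_id := fun u => Subtype.ext (NElem.one_mul' u.1)
  assoc := fun u v w => Subtype.ext (NElem.mul_assoc' w.1 v.1 u.1).symm

theorem natTrans_app_eqToHom {H : A ⥤ A} (σ : 𝟭 A ⟶ H) {c c' : A} (e : c = c') :
    σ.app c = eqToHom e ≫ σ.app c' ≫ eqToHom (congrArg H.obj e).symm := by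
  cases e; simp

/-- The comparison functor from the action groupoid to `SAut(A)`: the identity on
objects; the morphism determined by `n = (F,σ)` with source `G` is sent to the
natural transformation `G ⟹ G ⋙ F` with component `σ(G(a))` at `a` (the
identification of `G ⋙ F` with the recorded target is via `eqToHom`). -/
def actToSAut (A : Type u) [Groupoid A] : NActCat A ⥤ SAutCat A where
  obj G := G
  map {G G'} u :=
    { app := fun a =>
        u.1.σ.app (G.F.obj a) ≫ eqToHom (congrArg (fun H => GrpdAut.F H |>.obj a) u.2)
      naturality := by
        intro a b h
        have h1 := u.1.σ.naturality (G.F.map h)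
        simp only [Functor.id_map] at h1
        have h2 := Functor.congr_hom (congrArg GrpdAut.F u.2) h
        show G.F.map h ≫ _ = _
        rw [← Category.assoc, h1, Category.assoc, Category.assoc]
        congr 1
        rw [show u.1.F.F.map (G.F.map h) = ((u.1.act G)).F.map h from rfl, h2]
        erw [Category.assoc, Category.assoc, eqToHom_trans, eqToHom_refl, Category.comp_id]
        rfl }
  map_id G := by
    apply NatTrans.ext
    funext a
    show 𝟙 _ ≫ eqToHom _ = _
    simp
    rfl
  map_comp {G G₁ G₂} u v := by
    apply NatTrans.ext
    funext a
    have e : u.1.F.F.obj (G.F.obj a) = G₁.F.obj a :=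
      congrArg (fun H => GrpdAut.F H |>.obj a) u.2
    show (u.1.σ.app (G.F.obj a) ≫ v.1.σ.app (u.1.F.F.obj (G.F.obj a))) ≫ eqToHom _ =
      (u.1.σ.app (G.F.obj a) ≫ eqToHom _) ≫ (v.1.σ.app (G₁.F.obj a) ≫ eqToHom _)
    rw [natTrans_app_eqToHom v.1.σ e]
    simp only [Category.assoc]
    erw [eqToHom_trans]

theorem GrpdAut.ext' {f g : GrpdAut A} (h1 : f.F = g.F) (h2 : f.inv = g.inv) :
    f = g := by
  rcases f with ⟨F1, i1, _, _⟩
  rcases g with ⟨F2, i2, _, _⟩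
  dsimp at h1 h2
  subst h1; subst h2
  rfl

theorem NElem.ext' {f g : NElem A} (h : f.F = g.F)
    (h2 : ∀ x, f.σ.app x = g.σ.app x ≫
      eqToHom (congrArg (fun H => (GrpdAut.F H).obj x) h).symm) : f = g := by
  rcases f with ⟨F1, σ1⟩
  rcases g with ⟨F2, σ2⟩
  dsimp at h
  subst h
  simp only [eqToHom_refl, Category.comp_id] at h2
  congr 1
  exact NatTrans.ext (funext h2)

theorem natTrans_app_eqToHom' {H K : A ⥤ A} (σ : H ⟶ K) {c c' : A} (e : c = c') :
    σ.app c = eqToHom (congrArg H.obj e) ≫ σ.app c' ≫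
      eqToHom (congrArg K.obj e).symm := by
  cases e; simp

theorem NElem.act_one (G : GrpdAut A) : (NElem.one A).act G = G :=
  GrpdAut.ext' (Functor.comp_id _) (Functor.id_comp _)

theorem NElem.act_mul (n m : NElem A) (G : GrpdAut A) :
    (NElem.mul n m).act G = n.act (m.act G) :=
  GrpdAut.ext' rfl rfl

set_option maxHeartbeats 1000000 in
/-- The inverse comparison functor. -/
def sAutToAct (A : Type u) [Groupoid A] : SAutCat A ⥤ NActCat A where
  obj G := G
  map {G G'} σ :=
    ⟨{ F :=
        { F := G.inv ⋙ G'.F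
          inv := G'.inv ⋙ G.F
          comp_inv := by
            rw [Functor.assoc, ← Functor.assoc G'.F, G'.comp_inv, Functor.id_comp,
              G.inv_comp]
          inv_comp := by
            rw [Functor.assoc, ← Functor.assoc G.F, G.comp_inv, Functor.id_comp,
              G'.inv_comp] }
       σ :=
        { app := fun x =>
            eqToHom (congrArg (fun H : A ⥤ A => H.obj x) G.inv_comp).symm ≫
              σ.app (G.inv.obj x)
          naturality := by
            intro x y h
            have h1 := σ.naturality (G.inv.map h)
            have h2 := Functor.congr_hom G.inv_comp h
            simp only [Functor.id_map, Functor.comp_map] at h1 h2 ⊢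
            rw [Category.assoc, ← h1, h2]
            simp } }, by
      refine GrpdAut.ext' ?_ ?_
      · show G.F ⋙ G.inv ⋙ G'.F = G'.F
        rw [← Functor.assoc, G.comp_inv, Functor.id_comp]
      · show (G'.inv ⋙ G.F) ⋙ G.inv = G'.inv
        rw [Functor.assoc, G.comp_inv, Functor.comp_id]⟩
  map_id G := by
    refine Subtype.ext (NElem.ext' ?_ ?_).symm
    · refine GrpdAut.ext' G.inv_comp.symm G.inv_comp.symm
    · intro x
      show 𝟙 _ = (eqToHom _ ≫ 𝟙 _) ≫ eqToHom _
      simp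
      erw [eqToHom_trans, eqToHom_refl]
  map_comp {G G₁ G₂} σ τ := by
    refine Subtype.ext (NElem.ext' ?_ ?_)
    · refine GrpdAut.ext' ?_ ?_
      · show G.inv ⋙ G₂.F = (G.inv ⋙ G₁.F) ⋙ (G₁.inv ⋙ G₂.F)
        rw [Functor.assoc, ← Functor.assoc G₁.F, G₁.comp_inv, Functor.id_comp]
      · show G₂.inv ⋙ G.F = (G₂.inv ⋙ G₁.F) ⋙ (G₁.inv ⋙ G.F)
        rw [Functor.assoc, ← Functor.assoc G₁.F, G₁.comp_inv, Functor.id_comp]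
    · intro x
      have e : G.inv.obj x = G₁.inv.obj ((G.inv ⋙ G₁.F).obj x) := by
        have := Functor.congr_obj G₁.comp_inv (G.inv.obj x)
        simpa using this.symm
      show eqToHom _ ≫ (σ ≫ τ).app (G.inv.obj x) =
        ((eqToHom _ ≫ σ.app (G.inv.obj x)) ≫
          (eqToHom _ ≫ τ.app (G₁.inv.obj ((G.inv ⋙ G₁.F).obj x)))) ≫ eqToHom _
      have hc : (σ ≫ τ).app (G.inv.obj x) = σ.app (G.inv.obj x) ≫ τ.app (G.inv.obj x) :=
        rfl
      rw [hc, natTrans_app_eqToHom' τ e]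
      simp only [Category.assoc, eqToHom_trans, eqToHom_refl, Category.comp_id,
        Category.id_comp, eqToHom_trans_assoc]

set_option maxHeartbeats 1000000 in
theorem comp_Ψ : actToSAut A ⋙ sAutToAct A = 𝟭 (NActCat A) := by
  refine CategoryTheory.Functor.ext (fun G => rfl) ?_
  intro G G' u
  simp only [eqToHom_refl, Category.comp_id, Category.id_comp, Functor.id_map]
  erw [eqToHom_refl, eqToHom_refl, Category.comp_id, Category.id_comp]
  refine Subtype.ext (NElem.ext' ?_ ?_)
  · have hF : G'.F = G.F ⋙ u.1.F.F := congrArg GrpdAut.F u.2.symm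
    have hI : G'.inv = u.1.F.inv ⋙ G.inv := congrArg GrpdAut.inv u.2.symm
    refine GrpdAut.ext' ?_ ?_
    · show G.inv ⋙ G'.F = u.1.F.F
      rw [hF, ← Functor.assoc, G.inv_comp, Functor.id_comp]
    · show G'.inv ⋙ G.F = u.1.F.inv
      rw [hI, Functor.assoc, G.inv_comp, Functor.comp_id]
  · intro x
    have e : G.F.obj (G.inv.obj x) = x :=
      congrArg (fun H : A ⥤ A => H.obj x) G.inv_comp
    show eqToHom _ ≫ (u.1.σ.app (G.F.obj (G.inv.obj x)) ≫ eqToHom _) =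
      u.1.σ.app x ≫ eqToHom _
    rw [natTrans_app_eqToHom' u.1.σ e]
    simp
    erw [eqToHom_trans_assoc, eqToHom_refl, Category.id_comp, eqToHom_trans]

set_option maxHeartbeats 1000000 in
theorem Ψ_comp : sAutToAct A ⋙ actToSAut A = 𝟭 (SAutCat A) := by
  refine CategoryTheory.Functor.ext (fun G => rfl) ?_
  intro G G' σ
  simp only [eqToHom_refl, Category.comp_id, Category.id_comp, Functor.id_map]
  erw [eqToHom_refl, eqToHom_refl, Category.comp_id, Category.id_comp]
  refine NatTrans.ext (funext fun a => ?_)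
  have e : G.inv.obj (G.F.obj a) = a :=
    congrArg (fun H : A ⥤ A => H.obj a) G.comp_inv
  show (eqToHom _ ≫ σ.app (G.inv.obj (G.F.obj a))) ≫ eqToHom _ = σ.app a
  rw [natTrans_app_eqToHom' σ e]
  simp
  erw [eqToHom_trans_assoc, eqToHom_refl, Category.id_comp, eqToHom_trans, eqToHom_refl,
    Category.comp_id]

/-- `N_A` acts on strict automorphisms by `(F,σ) • G = G ⋙ F`,
and the comparison functor `actToSAut` — identity on objects, sending the morphism
determined by `(F,σ)` with source `G` to the natural transformation with components
`σ(G(a))` — is an isomorphism of categories from the action groupoid to `SAut(A)`. -/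
theorem sAut_iso_action_groupoid (A : Type u) [Groupoid A] :
    (∀ G : GrpdAut A, (NElem.one A).act G = G) ∧
    (∀ n m : NElem A, ∀ G : GrpdAut A, (NElem.mul n m).act G = n.act (m.act G)) ∧
    (∀ G : NActCat A, (actToSAut A).obj G = G) ∧
    (∃ Ψ : SAutCat A ⥤ NActCat A,
      actToSAut A ⋙ Ψ = 𝟭 (NActCat A) ∧ Ψ ⋙ actToSAut A = 𝟭 (SAutCat A)) := by
  exact ⟨NElem.act_one, NElem.act_mul, fun _ => rfl, sAutToAct A, comp_Ψ, Ψ_comp⟩
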